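/- Let n, T ≥ 1 and let w : (Fin T → Fin n × Fin n) → ℝ be a probability mass function on the finite set of length-T transcripts of action pairs (w s ≥ 0 for all s and ∑ s, w s = 1). Then there exists a probability vector β on Fin n × Fin n such that for every function M : Fin n × Fin n → ℝ, ∑ s, w s * (∑ t, M (s t)) = T * ∑ k, β k * M k. Consequently, for payoff functions M₁, M₂ : Fin n × Fin n → ℝ and any V : ℝ, if ∑ s, w s * (∑ t, M₂ (s t)) ≥ V * T, then ∑ s, w s * (∑ t, M₁ (s t)) ≤ T * sSup { r : ℝ | ∃ α a probability vector on Fin n × Fin n, ∑ k, α k * M₂ k ≥ V ∧ r = ∑ k, α k * M₁ k }. -/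

import Mathlib

/-- fiberwise decomposition of a sum over time steps -/
lemma sum_fiber_decomp {n T : ℕ} (s : Fin T → Fin n × Fin n) (M : Fin n × Fin n → ℝ) :
    ∑ t, M (s t) =
      ∑ k, ((Finset.univ.filter (fun t => s t = k)).card : ℝ) * M k := by
  rw [← Finset.sum_fiberwise Finset.univ s (fun t => M (s t))]
  refine Finset.sum_congr rfl (fun k _ => ?_)
  rw [Finset.sum_congr rfl (fun t ht => by
        rw [(Finset.mem_filter.mp ht).2]),
      Finset.sum_const, nsmul_eq_mul]

lemma sum_fiber_card {n T : ℕ} (s : Fin T → Fin n × Fin n) :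
    ∑ k, ((Finset.univ.filter (fun t => s t = k)).card : ℝ) = T := by
  have := sum_fiber_decomp s (fun _ => (1 : ℝ))
  simpa using this.symm

/-- Distribution-over-transcripts core of the LP upper bound: any
probability mass function on length-`T` transcripts has a time-averaged
marginal `β` over action pairs, and if the follower's expected total payoff
is at least `V * T` then the leader's expected total payoff is at most `T`
times the LP optimum. -/
theorem lp_upper_bound_transcripts (n T : ℕ) (hn : 1 ≤ n) (hT : 1 ≤ T)
    (w : (Fin T → Fin n × Fin n) → ℝ)
    (hw : ∀ s, 0 ≤ w s) (hw1 : ∑ s, w s = 1) :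
    (∃ β : Fin n × Fin n → ℝ, (∀ k, 0 ≤ β k) ∧ (∑ k, β k = 1) ∧
      ∀ M : Fin n × Fin n → ℝ,
        ∑ s, w s * (∑ t, M (s t)) = T * ∑ k, β k * M k) ∧
    ∀ (M₁ M₂ : Fin n × Fin n → ℝ) (V : ℝ),
      (∑ s, w s * (∑ t, M₂ (s t)) ≥ V * T) →
      ∑ s, w s * (∑ t, M₁ (s t)) ≤
        T * sSup { r : ℝ | ∃ α : Fin n × Fin n → ℝ,
          (∀ k, 0 ≤ α k) ∧ (∑ k, α k = 1) ∧
          (∑ k, α k * M₂ k ≥ V) ∧ r = ∑ k, α k * M₁ k } := by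
  have hT0 : (0 : ℝ) < T := by exact_mod_cast hT
  set β : Fin n × Fin n → ℝ := fun k =>
    (1 / T) * ∑ s, w s * ((Finset.univ.filter (fun t => s t = k)).card : ℝ) with hβ
  have hβnn : ∀ k, 0 ≤ β k := by
    intro k
    apply mul_nonneg (by positivity)
    exact Finset.sum_nonneg fun s _ => mul_nonneg (hw s) (by positivity)
  have hβ1 : ∑ k, β k = 1 := by
    rw [← Finset.mul_sum, Finset.sum_comm]
    have : ∀ s : Fin T → Fin n × Fin n,
        ∑ k, w s * ((Finset.univ.filter (fun t => s t = k)).card : ℝ) = w s * T := by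
      intro s; rw [← Finset.mul_sum, sum_fiber_card]
    rw [Finset.sum_congr rfl (fun s _ => this s), ← Finset.sum_mul, hw1]
    field_simp
  have hkey : ∀ M : Fin n × Fin n → ℝ,
      ∑ s, w s * (∑ t, M (s t)) = T * ∑ k, β k * M k := by
    intro M
    have h1 : ∑ s, w s * (∑ t, M (s t))
        = ∑ k, (∑ s, w s * ((Finset.univ.filter (fun t => s t = k)).card : ℝ)) * M k := by
      simp only [sum_fiber_decomp, Finset.mul_sum]
      rw [Finset.sum_comm]
      refine Finset.sum_congr rfl fun k _ => ?_
      rw [Finset.sum_mul]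
      refine Finset.sum_congr rfl fun s _ => ?_
      ring
    rw [h1, Finset.mul_sum]
    refine Finset.sum_congr rfl fun k _ => ?_
    simp only [hβ]
    field_simp
  refine ⟨⟨β, hβnn, hβ1, hkey⟩, ?_⟩
  intro M₁ M₂ V hV
  rw [hkey M₁]
  have hmem : (∑ k, β k * M₁ k) ∈ { r : ℝ | ∃ α : Fin n × Fin n → ℝ,
      (∀ k, 0 ≤ α k) ∧ (∑ k, α k = 1) ∧
      (∑ k, α k * M₂ k ≥ V) ∧ r = ∑ k, α k * M₁ k } := by
    refine ⟨β, hβnn, hβ1, ?_, rfl⟩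
    rw [hkey M₂] at hV
    have := (mul_le_mul_iff_right₀ hT0).mp (by linarith [hV] : (T : ℝ) * V ≤ T * ∑ k, β k * M₂ k)
    exact this
  have hbdd : BddAbove { r : ℝ | ∃ α : Fin n × Fin n → ℝ,
      (∀ k, 0 ≤ α k) ∧ (∑ k, α k = 1) ∧
      (∑ k, α k * M₂ k ≥ V) ∧ r = ∑ k, α k * M₁ k } := by
    refine ⟨∑ k, |M₁ k|, fun r hr => ?_⟩
    obtain ⟨α, hαnn, hα1, -, rfl⟩ := hr
    refine Finset.sum_le_sum fun k _ => ?_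
    calc α k * M₁ k ≤ α k * |M₁ k| := by
          exact mul_le_mul_of_nonneg_left (le_abs_self _) (hαnn k)
      _ ≤ 1 * |M₁ k| := by
          apply mul_le_mul_of_nonneg_right _ (abs_nonneg _)
          calc α k ≤ ∑ j, α j := Finset.single_le_sum (fun j _ => hαnn j) (Finset.mem_univ k)
            _ = 1 := hα1
      _ = |M₁ k| := one_mul _
  exact mul_le_mul_of_nonneg_left (le_csSup hbdd hmem) (le_of_lt hT0)
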